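/- arXiv:1508.04205 — 5 statements merged into one kernel-verified Lean document; each statement's English description precedes it below -/
import Mathlib

section
/- Let n ≥ 1 and let P(z) = (P¹(z), …, P^q(z)) be a polynomial mapping in z = (z¹, …, zⁿ) ∈ ℂⁿ. Suppose there is a Hermitian polynomial A(z, z̄) such that ‖P(z)‖² = A(z, z̄)·‖z‖² for all z ∈ ℂⁿ. If the linear rank r of P satisfies r < n, then A is identically zero and P is identically zero (so r = 0). (Huang's Lemma, the first gap of the SOS Conjecture.) -/
open scoped BigOperators

noncomputable section

open MvPolynomial Module

/-- The value at `z ∈ ℂⁿ` of the Hermitian polynomial `A(z, z̄) = Σ_{μ,ν} c_{μν} z^μ z̄^ν`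
determined by the finitely supported coefficient function `c` on pairs of multi-indices. -/
def hermEval {n : ℕ} (c : ((Fin n →₀ ℕ) × (Fin n →₀ ℕ)) →₀ ℂ) (z : Fin n → ℂ) : ℂ :=
  c.sum fun p a => a * (∏ i, z i ^ p.1 i) * ∏ i, (starRingEnd ℂ) (z i) ^ p.2 i

/-! ### Auxiliary lemmas -/

lemma huang_aeval_self_eq_eval {τ : Type*} (x : τ → ℂ) (p : MvPolynomial τ ℂ) :
    aeval x p = eval x p := by
  rw [aeval_def, Algebra.algebraMap_self]; rfl

lemma huang_eval_aeval {σ τ : Type*} (f : σ → MvPolynomial τ ℂ) (x : τ → ℂ)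
    (p : MvPolynomial σ ℂ) :
    eval x (aeval f p) = eval (fun i => eval x (f i)) p := by
  have h := MvPolynomial.comp_aeval (f := f) (φ := (MvPolynomial.aeval x : MvPolynomial τ ℂ →ₐ[ℂ] ℂ))
  have h2 := AlgHom.congr_fun h p
  simp only [AlgHom.coe_comp, Function.comp_apply] at h2
  rw [huang_aeval_self_eq_eval] at h2
  rw [h2]
  have : (fun i => (aeval x) (f i)) = fun i => eval x (f i) := by
    funext i; rw [huang_aeval_self_eq_eval]
  rw [this, huang_aeval_self_eq_eval]

lemma huang_line_eval {σ : Type*} (p : MvPolynomial σ ℂ) (cc d : σ → ℂ) :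
    ∃ Q : Polynomial ℂ, ∀ t : ℂ, Q.eval t = eval (fun i => cc i + t * d i) p := by
  refine ⟨MvPolynomial.aeval
    (fun i => Polynomial.C (cc i) + Polynomial.C (d i) * Polynomial.X) p, fun t => ?_⟩
  have h := MvPolynomial.comp_aeval
    (f := fun i => Polynomial.C (cc i) + Polynomial.C (d i) * Polynomial.X)
    (φ := (Polynomial.aeval t : Polynomial ℂ →ₐ[ℂ] ℂ))
  have h2 := AlgHom.congr_fun h p
  simp only [AlgHom.coe_comp, Function.comp_apply, map_add, map_mul,
    Polynomial.aeval_C, Polynomial.aeval_X, Polynomial.coe_aeval_eq_eval] at h2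
  rw [h2, huang_aeval_self_eq_eval]
  norm_num [mul_comm]

lemma huang_poly_zero_of_inf {Q : Polynomial ℂ} {S : Set ℂ} (hS : S.Infinite)
    (h : ∀ t ∈ S, Q.eval t = 0) : Q = 0 :=
  Q.eq_zero_of_infinite_isRoot (hS.mono fun t ht => h t ht)

lemma huang_ball_infinite {δ : ℝ} (hδ : 0 < δ) : {t : ℂ | ‖t‖ < δ}.Infinite := by
  have h1 : (Set.Ioo (0:ℝ) δ).Infinite := Set.Ioo_infinite hδ
  have h2 : ((fun x : ℝ => (x : ℂ)) '' Set.Ioo 0 δ).Infinite :=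
    h1.image (Set.injOn_of_injective Complex.ofReal_injective)
  refine h2.mono ?_
  rintro t ⟨x, hx, rfl⟩
  simpa [abs_of_pos hx.1] using hx.2

lemma huang_compl_zero_infinite : {t : ℂ | t ≠ 0}.Infinite := by
  have := (Set.finite_singleton (0:ℂ)).infinite_compl
  convert this using 1
  ext t; simp

lemma huang_compl_one_infinite (t₀ : ℂ) : {t : ℂ | t ≠ t₀}.Infinite := by
  have := (Set.finite_singleton t₀).infinite_compl
  convert this using 1
  ext t; simp

lemma huang_cont_eval {σ : Type*} (p : MvPolynomial σ ℂ) :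
    Continuous fun x : σ → ℂ => eval x p := by
  refine MvPolynomial.induction_on (motive := fun p => Continuous fun x : σ → ℂ => eval x p) p
    (fun a => by simpa using continuous_const)
    (fun p q hp hq => by simp only [map_add]; exact hp.add hq)
    (fun p i hp => by simp only [map_mul, eval_X]; exact hp.mul (continuous_apply i))

/-! ### Vanishing on real points -/

lemma huang_real_vanish : ∀ (m : ℕ) (F : MvPolynomial (Fin m) ℂ),
    (∀ x : Fin m → ℝ, eval (fun i => (x i : ℂ)) F = 0) → F = 0 := by
  intro m
  induction m with
  | zero =>
    intro F h
    apply MvPolynomial.funext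
    intro x
    have : x = fun i => ((0 : Fin 0 → ℝ) i : ℂ) := Subsingleton.elim _ _
    rw [this, h, map_zero]
  | succ m ih =>
    intro F h
    have hq : ∀ j, (finSuccEquiv ℂ m F).coeff j = 0 := by
      intro j
      apply ih
      intro s
      have hpoly : Polynomial.map (eval fun i => (s i : ℂ)) (finSuccEquiv ℂ m F) = 0 := by
        apply Polynomial.eq_zero_of_infinite_isRoot
        have hinf : (Set.range (fun y : ℝ => (y : ℂ))).Infinite :=
          Set.infinite_range_of_injective Complex.ofReal_injective
        refine hinf.mono ?_
        rintro t ⟨y, rfl⟩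
        have := h (Fin.cons y s)
        rw [show (fun i => ((Fin.cons y s : Fin (m+1) → ℝ) i : ℂ)) =
          Fin.cons (y : ℂ) (fun i => (s i : ℂ)) from ?_] at this
        · simpa [Polynomial.IsRoot, eval_eq_eval_mv_eval'] using this
        · funext i
          refine Fin.cases ?_ ?_ i <;> simp
      have := congrArg (fun Q => Polynomial.coeff Q j) hpoly
      simpa using this
    have : finSuccEquiv ℂ m F = 0 := Polynomial.ext fun j => by simp [hq j]
    exact (finSuccEquiv ℂ m).injective (by simpa using this)

lemma huang_real_vanish_sum {n : ℕ} (G : MvPolynomial (Fin n ⊕ Fin n) ℂ)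
    (h : ∀ x y : Fin n → ℝ,
      eval (Sum.elim (fun i => (x i : ℂ)) (fun i => (y i : ℂ))) G = 0) : G = 0 := by
  have key : renameEquiv ℂ finSumFinEquiv G = 0 := by
    apply huang_real_vanish
    intro x
    have : (fun i => (x i : ℂ)) ∘ (finSumFinEquiv : Fin n ⊕ Fin n ≃ Fin (n + n)) =
        Sum.elim (fun i => ((x (finSumFinEquiv (Sum.inl i)) : ℝ) : ℂ))
          (fun i => ((x (finSumFinEquiv (Sum.inr i)) : ℝ) : ℂ)) := by
      funext v; cases v <;> rfl
    rw [renameEquiv_apply, eval_rename, this]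
    exact h _ _
  simpa using (renameEquiv ℂ (finSumFinEquiv (m := n) (n := n))).injective (by simpa using key)

lemma huang_diag_vanish {n : ℕ} (F : MvPolynomial (Fin n ⊕ Fin n) ℂ)
    (h : ∀ z : Fin n → ℂ, eval (Sum.elim z (fun i => (starRingEnd ℂ) (z i))) F = 0) :
    ∀ x : (Fin n ⊕ Fin n) → ℂ, eval x F = 0 := by
  set σs : Fin n ⊕ Fin n → MvPolynomial (Fin n ⊕ Fin n) ℂ :=
    Sum.elim (fun i => X (Sum.inl i) + C Complex.I * X (Sum.inr i))
      (fun i => X (Sum.inl i) - C Complex.I * X (Sum.inr i)) with hσs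
  have hG : aeval σs F = 0 := by
    apply huang_real_vanish_sum
    intro x y
    rw [huang_eval_aeval]
    have : (fun v => eval (Sum.elim (fun i => (x i : ℂ)) fun i => (y i : ℂ)) (σs v)) =
        Sum.elim (fun i => (x i : ℂ) + Complex.I * (y i : ℂ))
          (fun i => (starRingEnd ℂ) ((x i : ℂ) + Complex.I * (y i : ℂ))) := by
      funext v
      cases v with
      | inl i => simp [hσs]
      | inr i =>
        simp [hσs, map_add, map_mul, Complex.conj_ofReal, Complex.conj_I]
        ring
    rw [this]
    exact h _
  intro xx
  have hx : xx = Sum.elim (xx ∘ Sum.inl) (xx ∘ Sum.inr) := by funext v; cases v <;> rfl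
  set a := xx ∘ Sum.inl
  set b := xx ∘ Sum.inr
  have := congrArg (eval (Sum.elim (fun i => (a i + b i) / 2)
    (fun i => (a i - b i) / (2 * Complex.I)))) hG
  rw [huang_eval_aeval, map_zero] at this
  have hfun : (fun v => eval (Sum.elim (fun i => (a i + b i) / 2)
      (fun i => (a i - b i) / (2 * Complex.I))) (σs v)) = Sum.elim a b := by
    funext v
    cases v with
    | inl i =>
      simp only [hσs, Sum.elim_inl, Sum.elim_inr, map_add, map_mul, eval_X, eval_C]
      field_simp
      ring
    | inr i =>
      simp only [hσs, Sum.elim_inr, Sum.elim_inl, map_sub, map_mul, eval_X, eval_C]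
      field_simp
      ring
  rw [hfun] at this
  rw [hx]
  exact this

/-! ### Polarization -/

lemma huang_conj_eval {n : ℕ} (w : Fin n → ℂ) (p : MvPolynomial (Fin n) ℂ) :
    (starRingEnd ℂ) (eval w p) =
      eval (fun i => (starRingEnd ℂ) (w i)) (map (starRingEnd ℂ) p) := by
  rw [eval_map]
  rw [show (eval w p) = eval₂ (RingHom.id ℂ) w p from rfl]
  rw [eval₂_comp_left]
  rfl

def sesq {n : ℕ} (c : ((Fin n →₀ ℕ) × (Fin n →₀ ℕ)) →₀ ℂ) : MvPolynomial (Fin n ⊕ Fin n) ℂ :=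
  c.sum fun p a => C a * (∏ i, X (Sum.inl i) ^ p.1 i) * ∏ i, X (Sum.inr i) ^ p.2 i

lemma huang_eval_sesq {n : ℕ} (c : ((Fin n →₀ ℕ) × (Fin n →₀ ℕ)) →₀ ℂ) (z ζ : Fin n → ℂ) :
    eval (Sum.elim z ζ) (sesq c) =
      c.sum fun p a => a * (∏ i, z i ^ p.1 i) * ∏ i, ζ i ^ p.2 i := by
  rw [sesq, Finsupp.sum, map_sum, Finsupp.sum]
  refine Finset.sum_congr rfl fun p _ => ?_
  simp [map_prod]

lemma huang_hermEval_eq_sesq {n : ℕ} (c : ((Fin n →₀ ℕ) × (Fin n →₀ ℕ)) →₀ ℂ) (z : Fin n → ℂ) :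
    hermEval c z = eval (Sum.elim z fun i => (starRingEnd ℂ) (z i)) (sesq c) := by
  rw [huang_eval_sesq]; rfl

lemma huang_polarize {n q : ℕ} (P : Fin q → MvPolynomial (Fin n) ℂ)
    (c : ((Fin n →₀ ℕ) × (Fin n →₀ ℕ)) →₀ ℂ)
    (heq : ∀ z : Fin n → ℂ,
      ((∑ k, Complex.normSq (MvPolynomial.eval z (P k)) : ℝ) : ℂ) =
        hermEval c z * ((∑ i, Complex.normSq (z i) : ℝ) : ℂ)) :
    ∀ z w : Fin n → ℂ,
      (∑ k, eval z (P k) * (starRingEnd ℂ) (eval w (P k))) =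
        (∑ i, z i * (starRingEnd ℂ) (w i)) *
          eval (Sum.elim z fun i => (starRingEnd ℂ) (w i)) (sesq c) := by
  set FF : MvPolynomial (Fin n ⊕ Fin n) ℂ :=
    (∑ k, rename Sum.inl (P k) * rename Sum.inr (map (starRingEnd ℂ) (P k))) -
      (∑ i, X (Sum.inl i) * X (Sum.inr i)) * sesq c with hFF
  have hev : ∀ z ζ : Fin n → ℂ, eval (Sum.elim z ζ) FF =
      (∑ k, eval z (P k) * eval ζ (map (starRingEnd ℂ) (P k))) -
        (∑ i, z i * ζ i) * eval (Sum.elim z ζ) (sesq c) := by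
    intro z ζ
    rw [hFF, map_sub, map_mul, map_sum, map_sum]
    congr 1
    · refine Finset.sum_congr rfl fun k _ => ?_
      rw [map_mul, eval_rename, eval_rename, Sum.elim_comp_inl, Sum.elim_comp_inr]
    · congr 1
      refine Finset.sum_congr rfl fun i _ => ?_
      simp
  have hdiag : ∀ z : Fin n → ℂ,
      eval (Sum.elim z fun i => (starRingEnd ℂ) (z i)) FF = 0 := by
    intro z
    rw [hev, sub_eq_zero]
    have h1 : (∑ k, eval z (P k) * eval (fun i => (starRingEnd ℂ) (z i))
        (map (starRingEnd ℂ) (P k))) = ((∑ k, Complex.normSq (eval z (P k)) : ℝ) : ℂ) := by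
      push_cast
      refine Finset.sum_congr rfl fun k _ => ?_
      rw [← huang_conj_eval, Complex.mul_conj]
    have h2 : (∑ i, z i * (starRingEnd ℂ) (z i)) = ((∑ i, Complex.normSq (z i) : ℝ) : ℂ) := by
      push_cast
      refine Finset.sum_congr rfl fun i _ => ?_
      rw [Complex.mul_conj]
    rw [h1, h2, heq z, huang_hermEval_eq_sesq]
    ring
  intro z w
  have := huang_diag_vanish FF hdiag (Sum.elim z fun i => (starRingEnd ℂ) (w i))
  rw [hev, sub_eq_zero] at this
  simp only [huang_conj_eval]
  exact this

/-! ### Rank comparison -/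

lemma huang_values_rank_le {n q : ℕ} (P : Fin q → MvPolynomial (Fin n) ℂ) :
    Module.finrank ℂ (Submodule.span ℂ
        (Set.range fun z : Fin n → ℂ => fun k => eval z (P k))) ≤
      Module.finrank ℂ (Submodule.span ℂ (Set.range P)) := by
  set V := Submodule.span ℂ (Set.range P) with hV
  haveI : FiniteDimensional ℂ V := FiniteDimensional.span_of_finite ℂ (Set.finite_range P)
  let b : Basis (Fin (finrank ℂ V)) ℂ V := Module.finBasis ℂ V
  let U : Fin q → Fin (finrank ℂ V) → ℂ :=
    fun k j => b.repr ⟨P k, Submodule.subset_span (Set.mem_range_self k)⟩ j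
  let T : (Fin (finrank ℂ V) → ℂ) →ₗ[ℂ] (Fin q → ℂ) := Matrix.mulVecLin (Matrix.of U)
  have key : ∀ z : Fin n → ℂ,
      (fun k => eval z (P k)) = T (fun j => eval z ((b j : MvPolynomial (Fin n) ℂ))) := by
    intro z
    funext k
    have hsum : (P k : MvPolynomial (Fin n) ℂ) = ∑ j, U k j • (b j : MvPolynomial (Fin n) ℂ) := by
      have := (b.sum_repr ⟨P k, Submodule.subset_span (Set.mem_range_self k)⟩).symm
      have h2 := congrArg (Subtype.val) this
      simpa only [Submodule.coe_sum, Submodule.coe_smul] using h2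
    show eval z (P k) = ∑ j, U k j * eval z ((b j : MvPolynomial (Fin n) ℂ))
    rw [hsum, map_sum]
    refine Finset.sum_congr rfl fun j _ => ?_
    rw [smul_eval]
  have hle : Submodule.span ℂ (Set.range fun z : Fin n → ℂ => fun k => eval z (P k)) ≤
      LinearMap.range T := by
    rw [Submodule.span_le]
    rintro _ ⟨z, rfl⟩
    exact ⟨_, (key z).symm⟩
  calc finrank ℂ (Submodule.span ℂ (Set.range fun z : Fin n → ℂ => fun k => eval z (P k)))
      ≤ finrank ℂ (LinearMap.range T) := Submodule.finrank_mono hle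
    _ ≤ finrank ℂ V := by simpa using LinearMap.finrank_range_le T

/-! ### The induction step -/

lemma huang_claim_step {m q : ℕ} (P : Fin q → MvPolynomial (Fin (m+1)) ℂ)
    (B : MvPolynomial (Fin (m+1) ⊕ Fin (m+1)) ℂ)
    (hH : ∀ z w : Fin (m+1) → ℂ,
      (∑ k, eval z (P k) * (starRingEnd ℂ) (eval w (P k))) =
        (∑ i, z i * (starRingEnd ℂ) (w i)) *
          eval (Sum.elim z fun i => (starRingEnd ℂ) (w i)) B)
    (hrank : Module.finrank ℂ (Submodule.span ℂ
        (Set.range fun z : Fin (m+1) → ℂ => fun k => eval z (P k))) < m + 1)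
    (IH : ∀ (P' : Fin q → MvPolynomial (Fin m) ℂ) (B' : MvPolynomial (Fin m ⊕ Fin m) ℂ),
      (∀ z w : Fin m → ℂ,
        (∑ k, eval z (P' k) * (starRingEnd ℂ) (eval w (P' k))) =
          (∑ i, z i * (starRingEnd ℂ) (w i)) *
            eval (Sum.elim z fun i => (starRingEnd ℂ) (w i)) B') →
      Module.finrank ℂ (Submodule.span ℂ
          (Set.range fun z : Fin m → ℂ => fun k => eval z (P' k))) < m →
      ∀ (k : Fin q) (z : Fin m → ℂ), eval z (P' k) = 0)
    (u : Fin (m+1) → ℂ) (hu : (fun k => eval u (P k)) ≠ (0 : Fin q → ℂ)) :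
    ∀ x : Fin (m+1) → ℂ, (∑ i, x i * (starRingEnd ℂ) (u i)) = 0 →
      ∀ k, eval x (P k) = 0 := by
  -- u ≠ 0
  have hu0 : u ≠ 0 := by
    intro h
    apply hu
    funext k
    have h1 := hH u u
    have h2 : (∑ i, u i * (starRingEnd ℂ) (u i)) = 0 := by
      rw [h]; simp
    rw [h2, zero_mul] at h1
    have h3 : ((∑ k, Complex.normSq (eval u (P k)) : ℝ) : ℂ) = 0 := by
      rw [← h1]; push_cast
      exact Finset.sum_congr rfl fun k _ => (Complex.mul_conj _).symm
    have h4 : (∑ k, Complex.normSq (eval u (P k)) : ℝ) = 0 := by exact_mod_cast h3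
    have h5 := (Finset.sum_eq_zero_iff_of_nonneg
      (fun k _ => Complex.normSq_nonneg _)).mp h4 k (Finset.mem_univ _)
    simpa using Complex.normSq_eq_zero.mp h5
  -- Euclidean setup
  set E := EuclideanSpace ℂ (Fin (m+1)) with hE
  let uE : E := WithLp.toLp 2 u
  have huE : uE ≠ 0 := (WithLp.toLp_eq_zero 2).not.mpr hu0
  haveI : Fact (finrank ℂ E = m + 1) := ⟨finrank_euclideanSpace_fin⟩
  let ob : OrthonormalBasis (Fin m) ℂ (↥(ℂ ∙ uE)ᗮ) :=
    OrthonormalBasis.fromOrthogonalSpanSingleton m huE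
  let M : Fin (m+1) → Fin m → ℂ := fun i j => (ob j : E) i
  have horth : ∀ j l, (∑ i, (starRingEnd ℂ) (M i j) * M i l) = if j = l then 1 else 0 := by
    intro j l
    have h1 := orthonormal_iff_ite.mp ob.orthonormal j l
    rw [Submodule.coe_inner] at h1
    rw [← h1, PiLp.inner_apply]
    simp only [RCLike.inner_apply']
    rfl
  have huorth : ∀ j, (∑ i, (starRingEnd ℂ) (u i) * M i j) = 0 := by
    intro j
    have h2 : ((ob j : (↥(ℂ ∙ uE)ᗮ)) : E) ∈ (ℂ ∙ uE)ᗮ := (ob j).2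
    have h3 := Submodule.mem_orthogonal_singleton_iff_inner_right.mp h2
    rw [PiLp.inner_apply] at h3
    simpa only [RCLike.inner_apply', uE, WithLp.ofLp_toLp] using h3
  have hrepr : ∀ (x : Fin (m+1) → ℂ), (∑ i, (starRingEnd ℂ) (u i) * x i) = 0 →
      ∃ y : Fin m → ℂ, ∀ i, x i = ∑ j, y j * M i j := by
    intro x hx
    let xE : E := WithLp.toLp 2 x
    have hxmem : xE ∈ (ℂ ∙ uE)ᗮ := by
      apply Submodule.mem_orthogonal_singleton_iff_inner_right.mpr
      rw [PiLp.inner_apply]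
      simpa only [RCLike.inner_apply', uE, xE, WithLp.ofLp_toLp] using hx
    refine ⟨fun j => ob.repr ⟨xE, hxmem⟩ j, ?_⟩
    have h4 := ob.sum_repr ⟨xE, hxmem⟩
    have h5 := congrArg (Subtype.val) h4
    rw [Submodule.coe_sum] at h5
    intro i
    have h6 := congrArg (fun v : E => v i) h5
    have h7 : x i = ∑ c : Fin m,
        (((ob.repr ⟨xE, hxmem⟩ c • ob c : ↥(ℂ ∙ uE)ᗮ) : E) i) :=
      h6.symm.trans ((congrFun (WithLp.ofLp_sum _ _ _ _) i).trans (Finset.sum_apply _ _ _))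
    rw [h7]
    exact Finset.sum_congr rfl fun j _ => by rw [Submodule.coe_smul]; rfl
  -- restricted data
  let ι : (Fin m → ℂ) → (Fin (m+1) → ℂ) := fun y i => ∑ j, y j * M i j
  let f : Fin (m+1) → MvPolynomial (Fin m) ℂ := fun i => ∑ j, X j * C (M i j)
  let P' : Fin q → MvPolynomial (Fin m) ℂ := fun k => aeval f (P k)
  have hP' : ∀ (y : Fin m → ℂ) k, eval y (P' k) = eval (ι y) (P k) := by
    intro y k
    show eval y (aeval f (P k)) = _
    rw [huang_eval_aeval]
    rw [show (fun i => eval y (f i)) = ι y from funext fun i => by simp [f, ι]]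
  let g : (Fin (m+1) ⊕ Fin (m+1)) → MvPolynomial (Fin m ⊕ Fin m) ℂ :=
    Sum.elim (fun i => ∑ j, X (Sum.inl j) * C (M i j))
      (fun i => ∑ j, X (Sum.inr j) * C ((starRingEnd ℂ) (M i j)))
  let B' : MvPolynomial (Fin m ⊕ Fin m) ℂ := aeval g B
  have hB' : ∀ (y w : Fin m → ℂ),
      eval (Sum.elim y fun j => (starRingEnd ℂ) (w j)) B' =
        eval (Sum.elim (ι y) fun i => (starRingEnd ℂ) (ι w i)) B := by
    intro y w
    show eval _ (aeval g B) = _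
    rw [huang_eval_aeval]
    rw [show (fun i => eval (Sum.elim y fun j => (starRingEnd ℂ) (w j)) (g i)) =
        (Sum.elim (ι y) fun i => (starRingEnd ℂ) (ι w i)) from ?_]
    funext vv
    cases vv with
    | inl i => simp [g, ι]
    | inr i =>
      simp [g, Sum.elim_inr, map_sum, map_mul, eval_X, eval_C, ι]
  have hdot : ∀ (y w : Fin m → ℂ),
      (∑ i, ι y i * (starRingEnd ℂ) (ι w i)) = ∑ j, y j * (starRingEnd ℂ) (w j) := by
    intro y w
    calc ∑ i, ι y i * (starRingEnd ℂ) (ι w i)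
        = ∑ i, ∑ j, ∑ l, (y j * (starRingEnd ℂ) (w l)) *
            ((starRingEnd ℂ) (M i l) * M i j) := by
          refine Finset.sum_congr rfl fun i _ => ?_
          show (∑ j, y j * M i j) * (starRingEnd ℂ) (∑ l, w l * M i l) = _
          rw [map_sum, Finset.sum_mul]
          refine Finset.sum_congr rfl fun j _ => ?_
          rw [Finset.mul_sum]
          refine Finset.sum_congr rfl fun l _ => ?_
          rw [map_mul]; ring
      _ = ∑ j, ∑ l, (y j * (starRingEnd ℂ) (w l)) *
            (∑ i, (starRingEnd ℂ) (M i l) * M i j) := by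
          rw [Finset.sum_comm]
          refine Finset.sum_congr rfl fun j _ => ?_
          rw [Finset.sum_comm]
          refine Finset.sum_congr rfl fun l _ => ?_
          rw [Finset.mul_sum]
      _ = ∑ j, y j * (starRingEnd ℂ) (w j) := by
          refine Finset.sum_congr rfl fun j _ => ?_
          simp only [horth]
          simp [Finset.sum_ite_eq]
  have hval0 : ∀ y : Fin m → ℂ,
      (∑ k, eval (ι y) (P k) * (starRingEnd ℂ) (eval u (P k))) = 0 := by
    intro y
    rw [hH (ι y) u]
    have : (∑ i, ι y i * (starRingEnd ℂ) (u i)) = 0 := by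
      calc ∑ i, ι y i * (starRingEnd ℂ) (u i)
          = ∑ i, ∑ j, y j * ((starRingEnd ℂ) (u i) * M i j) := by
            refine Finset.sum_congr rfl fun i _ => ?_
            show (∑ j, y j * M i j) * (starRingEnd ℂ) (u i) = _
            rw [Finset.sum_mul]
            exact Finset.sum_congr rfl fun j _ => by ring
        _ = ∑ j, y j * (∑ i, (starRingEnd ℂ) (u i) * M i j) := by
            rw [Finset.sum_comm]
            exact Finset.sum_congr rfl fun j _ => by rw [Finset.mul_sum]
        _ = 0 := by simp [huorth]
    rw [this, zero_mul]
  have hH' : ∀ z w : Fin m → ℂ,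
      (∑ k, eval z (P' k) * (starRingEnd ℂ) (eval w (P' k))) =
        (∑ i, z i * (starRingEnd ℂ) (w i)) *
          eval (Sum.elim z fun i => (starRingEnd ℂ) (w i)) B' := by
    intro z w
    simp only [hP']
    rw [hB', ← hdot z w]
    exact hH (ι z) (ι w)
  -- rank decrease
  let φ : (Fin q → ℂ) →ₗ[ℂ] ℂ :=
    ∑ k, (starRingEnd ℂ) (eval u (P k)) • LinearMap.proj k
  have hφ : ∀ x : Fin q → ℂ, φ x = ∑ k, (starRingEnd ℂ) (eval u (P k)) * x k := by
    intro x
    simp [φ, LinearMap.sum_apply]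
  set W := Submodule.span ℂ
    (Set.range fun z : Fin (m+1) → ℂ => fun k => eval z (P k)) with hW
  have hWle : Submodule.span ℂ
      (Set.range fun z : Fin m → ℂ => fun k => eval z (P' k)) ≤ W ⊓ LinearMap.ker φ := by
    rw [Submodule.span_le]
    rintro _ ⟨y, rfl⟩
    rw [SetLike.mem_coe, Submodule.mem_inf]
    constructor
    · have hfun : (fun k => eval y (P' k)) = fun k => eval (ι y) (P k) := by
        funext k; rw [hP']
      show (fun k => eval y (P' k)) ∈ W
      rw [hfun]
      exact Submodule.subset_span (Set.mem_range_self _)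
    · rw [LinearMap.mem_ker, hφ, ← hval0 y]
      refine Finset.sum_congr rfl fun k _ => ?_
      show (starRingEnd ℂ) (eval u (P k)) * eval y (P' k) = _
      rw [hP']; ring
  have haW : (fun k => eval u (P k)) ∈ W := Submodule.subset_span (Set.mem_range_self u)
  have haφ : φ (fun k => eval u (P k)) ≠ 0 := by
    rw [hφ]
    have hcast : (∑ k, (starRingEnd ℂ) (eval u (P k)) * eval u (P k)) =
        ((∑ k, Complex.normSq (eval u (P k)) : ℝ) : ℂ) := by
      push_cast
      exact Finset.sum_congr rfl fun k _ => by
        rw [mul_comm, Complex.mul_conj]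
    rw [hcast]
    obtain ⟨k', hk'⟩ := Function.ne_iff.mp hu
    have hpos : 0 < (∑ k, Complex.normSq (eval u (P k)) : ℝ) := by
      have h1 : 0 < Complex.normSq (eval u (P k')) :=
        Complex.normSq_pos.mpr (by simpa using hk')
      refine lt_of_lt_of_le h1 ?_
      exact Finset.single_le_sum (f := fun k => Complex.normSq (eval u (P k)))
        (fun k _ => Complex.normSq_nonneg _) (Finset.mem_univ k')
    simpa using Complex.ofReal_ne_zero.mpr (ne_of_gt hpos)
  have hlt : W ⊓ LinearMap.ker φ < W := by
    refine lt_of_le_of_ne inf_le_left ?_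
    intro hEq
    exact haφ (inf_eq_left.mp hEq haW)
  have hrank' : Module.finrank ℂ (Submodule.span ℂ
      (Set.range fun z : Fin m → ℂ => fun k => eval z (P' k))) < m := by
    have h1 := Submodule.finrank_mono hWle
    have h2 := Submodule.finrank_lt_finrank_of_lt hlt
    omega
  have hzero' := IH P' B' hH' hrank'
  -- conclude
  intro x hx k
  obtain ⟨y, hy⟩ := hrepr x (by
    rw [← hx]
    exact Finset.sum_congr rfl fun i _ => by ring)
  have hxι : x = ι y := funext hy
  rw [hxι, ← hP']
  exact hzero' k y

/-! ### Existence of an orthogonal vector, and vanishing along lines -/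

lemma huang_exists_orth {m : ℕ} (z₁ : Fin (m+1) → ℂ) (hm : 1 ≤ m) :
    ∃ x₀ : Fin (m+1) → ℂ, (∑ i, x₀ i * (starRingEnd ℂ) (z₁ i)) = 0 ∧ x₀ ≠ 0 := by
  let φ : (Fin (m+1) → ℂ) →ₗ[ℂ] ℂ :=
    ∑ i, (starRingEnd ℂ) (z₁ i) • LinearMap.proj i
  have hφ : ∀ x : Fin (m+1) → ℂ, φ x = ∑ i, (starRingEnd ℂ) (z₁ i) * x i := by
    intro x; simp [φ]
  have hdim : 0 < finrank ℂ (LinearMap.ker φ) := by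
    have h1 := LinearMap.finrank_range_add_finrank_ker φ
    have h2 : finrank ℂ (Fin (m+1) → ℂ) = m + 1 := by simp
    have h3 : finrank ℂ (LinearMap.range φ) ≤ 1 := by
      have := Submodule.finrank_le (LinearMap.range φ)
      simpa using this
    omega
  obtain ⟨x₀, hx₀⟩ := Module.finrank_pos_iff_exists_ne_zero.mp hdim
  refine ⟨↑x₀, ?_, ?_⟩
  · have := x₀.2
    rw [LinearMap.mem_ker, hφ] at this
    rw [← this]
    exact Finset.sum_congr rfl fun i _ => by ring
  · intro h
    exact hx₀ (Subtype.ext h)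

lemma huang_line_vanish {m q : ℕ} (P : Fin q → MvPolynomial (Fin (m+1)) ℂ)
    (claim : ∀ u : Fin (m+1) → ℂ, (fun k => eval u (P k)) ≠ (0 : Fin q → ℂ) →
      ∀ x : Fin (m+1) → ℂ, (∑ i, x i * (starRingEnd ℂ) (u i)) = 0 →
        ∀ k, eval x (P k) = 0)
    (z₁ : Fin (m+1) → ℂ) (k₀ : Fin q) (hz₁ : eval z₁ (P k₀) ≠ 0)
    (x' : Fin (m+1) → ℂ) (hx'ne : x' ≠ 0)
    (hx'orth : (∑ i, x' i * (starRingEnd ℂ) (z₁ i)) = 0) :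
    ∀ (kk : Fin q) (s : ℂ), eval (fun i => x' i + s * z₁ i) (P kk) = 0 := by
  set a : ℝ := ∑ i, Complex.normSq (x' i) with haDef
  set b : ℝ := ∑ i, Complex.normSq (z₁ i) with hbDef
  have ha : (a : ℂ) ≠ 0 := by
    obtain ⟨i₀, hi₀⟩ := Function.ne_iff.mp hx'ne
    have hpos : 0 < a := by
      have h1 : 0 < Complex.normSq (x' i₀) := Complex.normSq_pos.mpr (by simpa using hi₀)
      refine lt_of_lt_of_le h1 ?_
      exact Finset.single_le_sum (f := fun i => Complex.normSq (x' i))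
        (fun i _ => Complex.normSq_nonneg _) (Finset.mem_univ i₀)
    simpa using Complex.ofReal_ne_zero.mpr (ne_of_gt hpos)
  set β : ℂ := (b : ℂ) / (a : ℂ) with hβDef
  have hβc : (starRingEnd ℂ) β = β := by
    rw [hβDef, map_div₀, Complex.conj_ofReal, Complex.conj_ofReal]
  set u : ℂ → Fin (m+1) → ℂ := fun s i =>
    (1 + s * (starRingEnd ℂ) s * β) * z₁ i -
      ((starRingEnd ℂ) s * β) * (x' i + s * z₁ i) with huDef
  have hu0 : u 0 = z₁ := by
    funext i; simp [huDef]
  have hcontu : Continuous fun s : ℂ => u s := by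
    apply continuous_pi
    intro i
    have hc : Continuous fun s : ℂ => (starRingEnd ℂ) s := Complex.continuous_conj
    fun_prop
  have hcont : Continuous fun s : ℂ => eval (u s) (P k₀) :=
    (huang_cont_eval (P k₀)).comp hcontu
  have hopen : IsOpen {s : ℂ | eval (u s) (P k₀) ≠ 0} :=
    IsOpen.preimage hcont isOpen_ne
  have hmem0 : (0 : ℂ) ∈ {s : ℂ | eval (u s) (P k₀) ≠ 0} := by
    simp only [Set.mem_setOf_eq, hu0]
    exact hz₁
  obtain ⟨δ, hδ, hball⟩ := Metric.isOpen_iff.mp hopen 0 hmem0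
  have hS2 : (∑ i, x' i * (starRingEnd ℂ) (x' i)) = (a : ℂ) := by
    rw [haDef]
    push_cast
    exact Finset.sum_congr rfl fun i _ => Complex.mul_conj _
  have hS3 : (∑ i, z₁ i * (starRingEnd ℂ) (z₁ i)) = (b : ℂ) := by
    rw [hbDef]
    push_cast
    exact Finset.sum_congr rfl fun i _ => Complex.mul_conj _
  have hS4 : (∑ i, z₁ i * (starRingEnd ℂ) (x' i)) = 0 := by
    calc ∑ i, z₁ i * (starRingEnd ℂ) (x' i)
        = (starRingEnd ℂ) (∑ i, x' i * (starRingEnd ℂ) (z₁ i)) := by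
          rw [map_sum]
          exact Finset.sum_congr rfl fun i _ => by
            rw [map_mul, Complex.conj_conj]; ring
      _ = 0 := by rw [hx'orth, map_zero]
  have horths : ∀ s : ℂ, (∑ i, (x' i + s * z₁ i) * (starRingEnd ℂ) (u s i)) = 0 := by
    intro s
    have hexp : ∀ i, (x' i + s * z₁ i) * (starRingEnd ℂ) (u s i) =
        ((1 + (starRingEnd ℂ) s * s * β) - s * β * (starRingEnd ℂ) s) *
            (x' i * (starRingEnd ℂ) (z₁ i))
          + (-(s * β)) * (x' i * (starRingEnd ℂ) (x' i))
          + ((s * (1 + (starRingEnd ℂ) s * s * β)) - s^2 * β * (starRingEnd ℂ) s) *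
            (z₁ i * (starRingEnd ℂ) (z₁ i))
          + (-(s^2 * β)) * (z₁ i * (starRingEnd ℂ) (x' i)) := by
      intro i
      have hcu : (starRingEnd ℂ) (u s i) =
          (1 + (starRingEnd ℂ) s * s * β) * (starRingEnd ℂ) (z₁ i) -
            (s * β) * ((starRingEnd ℂ) (x' i) + (starRingEnd ℂ) s * (starRingEnd ℂ) (z₁ i)) := by
        simp only [huDef, map_sub, map_mul, map_add, map_one, hβc, Complex.conj_conj]
        try ring
      rw [hcu]; ring
    calc (∑ i, (x' i + s * z₁ i) * (starRingEnd ℂ) (u s i))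
        = ∑ i, (((1 + (starRingEnd ℂ) s * s * β) - s * β * (starRingEnd ℂ) s) *
            (x' i * (starRingEnd ℂ) (z₁ i))
          + (-(s * β)) * (x' i * (starRingEnd ℂ) (x' i))
          + ((s * (1 + (starRingEnd ℂ) s * s * β)) - s^2 * β * (starRingEnd ℂ) s) *
            (z₁ i * (starRingEnd ℂ) (z₁ i))
          + (-(s^2 * β)) * (z₁ i * (starRingEnd ℂ) (x' i))) :=
          Finset.sum_congr rfl fun i _ => hexp i
      _ = ((1 + (starRingEnd ℂ) s * s * β) - s * β * (starRingEnd ℂ) s) *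
            (∑ i, x' i * (starRingEnd ℂ) (z₁ i))
          + (-(s * β)) * (∑ i, x' i * (starRingEnd ℂ) (x' i))
          + ((s * (1 + (starRingEnd ℂ) s * s * β)) - s^2 * β * (starRingEnd ℂ) s) *
            (∑ i, z₁ i * (starRingEnd ℂ) (z₁ i))
          + (-(s^2 * β)) * (∑ i, z₁ i * (starRingEnd ℂ) (x' i)) := by
          rw [Finset.sum_add_distrib, Finset.sum_add_distrib, Finset.sum_add_distrib,
            ← Finset.mul_sum, ← Finset.mul_sum, ← Finset.mul_sum, ← Finset.mul_sum]
      _ = 0 := by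
          rw [hx'orth, hS2, hS3, hS4, hβDef]
          field_simp
          ring
  intro kk s
  obtain ⟨Q, hQe⟩ := huang_line_eval (P kk) x' z₁
  have hQ0 : Q = 0 := by
    apply huang_poly_zero_of_inf (huang_ball_infinite hδ)
    intro t ht
    rw [hQe]
    have hune : (fun k => eval (u t) (P k)) ≠ (0 : Fin q → ℂ) := by
      apply Function.ne_iff.mpr
      refine ⟨k₀, ?_⟩
      have htball : t ∈ Metric.ball (0 : ℂ) δ := by
        rw [Metric.mem_ball, Complex.dist_eq, sub_zero]
        exact ht
      simpa using hball htball
    exact claim (u t) hune (fun i => x' i + t * z₁ i) (horths t) kk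
  rw [← hQe s, hQ0]
  simp

/-! ### The key induction -/

lemma huang_keyL : ∀ (n : ℕ) (q : ℕ) (P : Fin q → MvPolynomial (Fin n) ℂ)
    (B : MvPolynomial (Fin n ⊕ Fin n) ℂ),
    (∀ z w : Fin n → ℂ,
      (∑ k, eval z (P k) * (starRingEnd ℂ) (eval w (P k))) =
        (∑ i, z i * (starRingEnd ℂ) (w i)) *
          eval (Sum.elim z fun i => (starRingEnd ℂ) (w i)) B) →
    Module.finrank ℂ (Submodule.span ℂ
        (Set.range fun z : Fin n → ℂ => fun k => eval z (P k))) < n →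
    ∀ (k : Fin q) (z : Fin n → ℂ), eval z (P k) = 0 := by
  intro n
  induction n with
  | zero => intro q P B hH hrank; omega
  | succ m ih =>
    intro q P B hH hrank
    rcases Nat.eq_zero_or_pos (finrank ℂ (Submodule.span ℂ
        (Set.range fun z : Fin (m+1) → ℂ => fun k => eval z (P k)))) with hr0 | hrpos
    · intro k z
      have hWbot : Submodule.span ℂ
          (Set.range fun z : Fin (m+1) → ℂ => fun k => eval z (P k)) = ⊥ :=
        Submodule.finrank_eq_zero.mp hr0
      have hmem : (fun k => eval z (P k)) ∈ Submodule.span ℂ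
          (Set.range fun z : Fin (m+1) → ℂ => fun k => eval z (P k)) :=
        Submodule.subset_span (Set.mem_range_self z)
      rw [hWbot, Submodule.mem_bot] at hmem
      exact congrFun hmem k
    · by_contra hcon
      push_neg at hcon
      obtain ⟨k₀, z₁, hz₁⟩ := hcon
      have hm : 1 ≤ m := by
        have := hrpos
        omega
      have claim : ∀ u : Fin (m+1) → ℂ, (fun k => eval u (P k)) ≠ (0 : Fin q → ℂ) →
          ∀ x : Fin (m+1) → ℂ, (∑ i, x i * (starRingEnd ℂ) (u i)) = 0 →
            ∀ k, eval x (P k) = 0 :=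
        huang_claim_step P B hH hrank (fun P' B' h1 h2 => ih q P' B' h1 h2)
      obtain ⟨x₀, hx₀orth, hx₀ne⟩ := huang_exists_orth z₁ hm
      have main : ∀ x' : Fin (m+1) → ℂ, x' ≠ 0 →
          (∑ i, x' i * (starRingEnd ℂ) (z₁ i)) = 0 →
          ∀ (kk : Fin q) (s : ℂ), eval (fun i => x' i + s * z₁ i) (P kk) = 0 :=
        fun x' h1 h2 => huang_line_vanish P claim z₁ k₀ hz₁ x' h1 h2
      obtain ⟨Q, hQ⟩ := huang_line_eval (P k₀) z₁ x₀
      have hQ0 : Q = 0 := by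
        apply huang_poly_zero_of_inf huang_compl_zero_infinite
        intro t ht
        rw [hQ]
        have := main (fun i => t * x₀ i) ?hne ?horth k₀ 1
        · rw [show (fun i => z₁ i + t * x₀ i) = (fun i => t * x₀ i + 1 * z₁ i)
            from funext fun i => by ring]
          exact this
        case hne =>
          intro h
          apply hx₀ne
          funext i
          have := congrFun h i
          rcases mul_eq_zero.mp this with h' | h'
          · exact absurd h' ht
          · exact h'
        case horth =>
          calc (∑ i, (t * x₀ i) * (starRingEnd ℂ) (z₁ i))
              = t * ∑ i, x₀ i * (starRingEnd ℂ) (z₁ i) := by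
                rw [Finset.mul_sum]; exact Finset.sum_congr rfl fun i _ => by ring
            _ = 0 := by rw [hx₀orth, mul_zero]
      apply hz₁
      have := congrArg (Polynomial.eval (0:ℂ)) hQ0
      rw [hQ 0] at this
      simpa using this

/-- **Huang's Lemma** (the first gap of the SOS Conjecture).  Let `n ≥ 1` and let
`P = (P¹, …, P^q)` be a polynomial mapping on `ℂⁿ`.  Suppose there is a Hermitian polynomial
`A(z, z̄)` with `‖P(z)‖² = A(z, z̄)·‖z‖²` for all `z ∈ ℂⁿ`.  If the linear rank of `P` is
less than `n`, then `A ≡ 0` and `P ≡ 0`. -/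
theorem huang_lemma {n q : ℕ} (hn : 1 ≤ n)
    (P : Fin q → MvPolynomial (Fin n) ℂ)
    (c : ((Fin n →₀ ℕ) × (Fin n →₀ ℕ)) →₀ ℂ)
    (hherm : ∀ μ ν : Fin n →₀ ℕ, c (ν, μ) = (starRingEnd ℂ) (c (μ, ν)))
    (heq : ∀ z : Fin n → ℂ,
      ((∑ k, Complex.normSq (MvPolynomial.eval z (P k)) : ℝ) : ℂ) =
        hermEval c z * ((∑ i, Complex.normSq (z i) : ℝ) : ℂ))
    (hrank : Module.finrank ℂ (Submodule.span ℂ (Set.range P)) < n) :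
    (∀ z : Fin n → ℂ, hermEval c z = 0) ∧ (∀ k, P k = 0) := by
  have hpol := huang_polarize P c heq
  have hrank2 : Module.finrank ℂ (Submodule.span ℂ
      (Set.range fun z : Fin n → ℂ => fun k => eval z (P k))) < n :=
    lt_of_le_of_lt (huang_values_rank_le P) hrank
  have hPz : ∀ (k : Fin q) (z : Fin n → ℂ), eval z (P k) = 0 :=
    huang_keyL n q P (sesq c) hpol hrank2
  have hP0 : ∀ k, P k = 0 := fun k => MvPolynomial.funext fun x => by
    rw [hPz k x]; simp
  -- the sesquilinear extension vanishes at points with nonvanishing pairing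
  have hzw : ∀ z w : Fin n → ℂ,
      (∑ i, z i * (starRingEnd ℂ) (w i)) *
        eval (Sum.elim z fun i => (starRingEnd ℂ) (w i)) (sesq c) = 0 := by
    intro z w
    rw [← hpol z w]
    refine Finset.sum_eq_zero fun k _ => ?_
    rw [hPz k z, zero_mul]
  -- step A: vanishing when the bilinear pairing is nonzero
  have hA : ∀ z ζ : Fin n → ℂ, (∑ i, z i * ζ i) ≠ 0 →
      eval (Sum.elim z ζ) (sesq c) = 0 := by
    intro z ζ hne
    have := hzw z (fun i => (starRingEnd ℂ) (ζ i))
    simp only [Complex.conj_conj] at this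
    rcases mul_eq_zero.mp this with h | h
    · exact absurd h hne
    · exact h
  -- step B: vanishing when ζ ≠ 0
  have hB : ∀ z ζ : Fin n → ℂ, ζ ≠ 0 → eval (Sum.elim z ζ) (sesq c) = 0 := by
    intro z ζ hζ
    set S : ℂ := ∑ i, ζ i * (starRingEnd ℂ) (ζ i) with hSdef
    have hSne : S ≠ 0 := by
      obtain ⟨i₀, hi₀⟩ := Function.ne_iff.mp hζ
      have hcast : S = ((∑ i, Complex.normSq (ζ i) : ℝ) : ℂ) := by
        rw [hSdef]; push_cast
        exact Finset.sum_congr rfl fun i _ => (Complex.mul_conj _)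
      rw [hcast]
      have hpos : 0 < (∑ i, Complex.normSq (ζ i) : ℝ) := by
        have h1 : 0 < Complex.normSq (ζ i₀) := Complex.normSq_pos.mpr hi₀
        refine lt_of_lt_of_le h1 ?_
        exact Finset.single_le_sum (f := fun i => Complex.normSq (ζ i))
          (fun i _ => Complex.normSq_nonneg _) (Finset.mem_univ i₀)
      simpa using Complex.ofReal_ne_zero.mpr (ne_of_gt hpos)
    set A0 : ℂ := ∑ i, z i * ζ i with hA0def
    obtain ⟨Q, hQe⟩ := huang_line_eval (sesq c)
      (Sum.elim z ζ) (Sum.elim (fun i => (starRingEnd ℂ) (ζ i)) (fun _ => 0))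
    have hform : ∀ t : ℂ,
        (fun v => Sum.elim z ζ v + t * Sum.elim (fun i => (starRingEnd ℂ) (ζ i))
          (fun _ => 0) v) = Sum.elim (fun i => z i + t * (starRingEnd ℂ) (ζ i)) ζ := by
      intro t; funext v; cases v <;> simp
    have hQ0 : Q = 0 := by
      apply huang_poly_zero_of_inf (huang_compl_one_infinite (-A0 / S))
      intro t ht
      rw [hQe, hform t]
      apply hA
      intro hzero
      apply ht
      have hexp : (∑ i, (z i + t * (starRingEnd ℂ) (ζ i)) * ζ i) = A0 + t * S := by
        rw [hA0def, hSdef, Finset.mul_sum, ← Finset.sum_add_distrib]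
        exact Finset.sum_congr rfl fun i _ => by ring
      rw [hexp] at hzero
      have : t * S = -A0 := by linear_combination hzero
      field_simp
      linear_combination this
    have := congrArg (Polynomial.eval (0:ℂ)) hQ0
    rw [hQe 0, hform 0] at this
    simpa using this
  -- step C: vanishing everywhere on the diagonal slot
  have hC : ∀ z ζ : Fin n → ℂ, eval (Sum.elim z ζ) (sesq c) = 0 := by
    intro z ζ
    rcases eq_or_ne ζ 0 with rfl | hζ
    · obtain ⟨Q, hQe⟩ := huang_line_eval (sesq c)
        (Sum.elim z 0) (Sum.elim (fun _ => 0) (fun _ => 1))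
      have hform : ∀ t : ℂ,
          (fun v => Sum.elim z (0 : Fin n → ℂ) v + t * Sum.elim (fun _ => (0:ℂ))
            (fun _ => 1) v) = Sum.elim z (fun _ => t) := by
        intro t; funext v; cases v <;> simp
      have hQ0 : Q = 0 := by
        apply huang_poly_zero_of_inf huang_compl_zero_infinite
        intro t ht
        rw [hQe, hform t]
        apply hB
        intro h
        have := congrFun h ⟨0, hn⟩
        exact ht this
      have h9 := congrArg (Polynomial.eval (0:ℂ)) hQ0
      rw [hQe 0, hform 0] at h9
      rw [show (Sum.elim z fun _ => (0:ℂ)) = Sum.elim z (0 : Fin n → ℂ) from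
        funext fun v => by cases v <;> rfl] at h9
      rw [h9]
      simp
    · exact hB z ζ hζ
  exact ⟨fun z => by rw [huang_hermEval_eq_sesq]; exact hC z _, hP0⟩
end
end

section
/- Let P(z) = (P¹(z), …, P^p(z)) and Q(z) = (Q¹(z), …, Q^q(z)) be polynomial mappings in z = (z¹, …, zⁿ) ∈ ℂⁿ such that ‖P(z)‖² = ‖Q(z)‖² for all z ∈ ℂⁿ. Then the components of P and the components of Q span the same complex vector subspace of ℂ[z¹, …, zⁿ]; in particular P and Q have the same linear rank. -/
open scoped BigOperators

noncomputable section

open MvPolynomial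

-- Lemma B: a ℂ-coefficient polynomial vanishing at all real points is zero.
lemma realfunext {σ : Type*} {h : MvPolynomial σ ℂ}
    (hv : ∀ v : σ → ℝ, eval (fun i => (v i : ℂ)) h = 0) : h = 0 := by
  set p1 : MvPolynomial σ ℝ := AddMonoidAlgebra.ofCoeff (Finsupp.mapRange Complex.re Complex.zero_re (AddMonoidAlgebra.coeff h)) with hp1
  set p2 : MvPolynomial σ ℝ := AddMonoidAlgebra.ofCoeff (Finsupp.mapRange Complex.im Complex.zero_im (AddMonoidAlgebra.coeff h)) with hp2
  have hco1 : ∀ d, coeff d p1 = (coeff d h).re := fun d => rfl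
  have hco2 : ∀ d, coeff d p2 = (coeff d h).im := fun d => rfl
  have key : ∀ (v : σ → ℝ), eval v p1 = (eval (fun i => (v i : ℂ)) h).re ∧
      eval v p2 = (eval (fun i => (v i : ℂ)) h).im := by
    intro v
    have hprod : ∀ d : σ →₀ ℕ, (∏ i ∈ d.support, ((v i : ℂ)) ^ d i)
        = ((∏ i ∈ d.support, (v i) ^ d i : ℝ) : ℂ) := by
      intro d; push_cast; ring
    constructor
    · rw [eval_eq, eval_eq]
      rw [Finset.sum_subset (show p1.support ⊆ h.support from Finsupp.support_mapRange (hf := Complex.zero_re))]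
      · rw [Complex.re_sum]
        refine Finset.sum_congr rfl fun d _ => ?_
        rw [hco1, hprod, Complex.mul_re, Complex.ofReal_re, Complex.ofReal_im]; ring
      · intro d _ hd
        rw [hco1]
        have : (coeff d p1) = 0 := MvPolynomial.notMem_support_iff.mp hd
        rw [hco1] at this; rw [this, zero_mul]
    · rw [eval_eq, eval_eq]
      rw [Finset.sum_subset (show p2.support ⊆ h.support from Finsupp.support_mapRange (hf := Complex.zero_im))]
      · rw [Complex.im_sum]
        refine Finset.sum_congr rfl fun d _ => ?_
        rw [hco2, hprod, Complex.mul_im, Complex.ofReal_re, Complex.ofReal_im]; ring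
      · intro d _ hd
        rw [hco2]
        have : (coeff d p2) = 0 := MvPolynomial.notMem_support_iff.mp hd
        rw [hco2] at this; rw [this, zero_mul]
  have h1 : p1 = 0 := by
    apply MvPolynomial.funext; intro v
    rw [(key v).1, hv v]; simp
  have h2 : p2 = 0 := by
    apply MvPolynomial.funext; intro v
    rw [(key v).2, hv v]; simp
  ext d
  have e1 : (coeff d h).re = 0 := by rw [← hco1, h1]; simp
  have e2 : (coeff d h).im = 0 := by rw [← hco2, h2]; simp
  simp [Complex.ext_iff, e1, e2]

-- helper: eval of bind₁
lemma eval_bind₁' {σ τ : Type*} (f : σ → MvPolynomial τ ℂ) (x : τ → ℂ) (g : MvPolynomial σ ℂ) :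
    eval x (bind₁ f g) = eval (fun i => eval x (f i)) g := by
  exact MvPolynomial.eval₂Hom_bind₁ (RingHom.id ℂ) x f g

-- Lemma A: a polynomial vanishing on the conjugate diagonal vanishes everywhere.
lemma vanish_of_conj_diag {σ : Type*} (g : MvPolynomial (σ ⊕ σ) ℂ)
    (hg : ∀ z : σ → ℂ, eval (Sum.elim z (fun j => starRingEnd ℂ (z j))) g = 0) :
    ∀ z w : σ → ℂ, eval (Sum.elim z w) g = 0 := by
  set f : σ ⊕ σ → MvPolynomial (σ ⊕ σ) ℂ :=
    Sum.elim (fun j => X (Sum.inl j) + C Complex.I * X (Sum.inr j))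
      (fun j => X (Sum.inl j) - C Complex.I * X (Sum.inr j)) with hf
  have hT : bind₁ f g = 0 := by
    apply realfunext
    intro v
    rw [eval_bind₁']
    have : (fun i => eval (fun i => ((v i : ℂ))) (f i)) =
        Sum.elim (fun j => (v (Sum.inl j) : ℂ) + Complex.I * v (Sum.inr j))
          (fun j => starRingEnd ℂ ((v (Sum.inl j) : ℂ) + Complex.I * v (Sum.inr j))) := by
      funext i
      cases i with
      | inl j => simp [hf]
      | inr j => simp [hf, Complex.ext_iff]
    rw [this, hg]
  intro z w
  set x : σ ⊕ σ → ℂ :=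
    Sum.elim (fun j => (z j + w j) / 2) (fun j => (z j - w j) / (2 * Complex.I)) with hx
  have : Sum.elim z w = fun i => eval x (f i) := by
    funext i
    cases i with
    | inl j =>
      simp only [hf, hx, Sum.elim_inl, Sum.elim_inr, map_add, map_mul, eval_C, eval_X]
      field_simp
      ring
    | inr j =>
      simp only [hf, hx, Sum.elim_inr, Sum.elim_inl, map_sub, map_mul, eval_C, eval_X]
      field_simp
      ring
  rw [this, ← eval_bind₁', hT, map_zero]

lemma conj_eval {σ : Type*} (w : σ → ℂ) (p : MvPolynomial σ ℂ) :
    eval w (map (starRingEnd ℂ) p) =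
      starRingEnd ℂ (eval (fun i => starRingEnd ℂ (w i)) p) := by
  rw [eval_map,
    show (eval (fun i => starRingEnd ℂ (w i))) p
      = eval₂ (RingHom.id ℂ) (fun i => starRingEnd ℂ (w i)) p from rfl,
    MvPolynomial.eval₂_comp_left]
  simp [Function.comp_def, Complex.conj_conj]

lemma span_le_aux {n p q : ℕ}
    (P : Fin p → MvPolynomial (Fin n) ℂ) (Q : Fin q → MvPolynomial (Fin n) ℂ)
    (hpoly : ∀ w : Fin n → ℂ,
      ∑ k, C (eval w (map (starRingEnd ℂ) (P k))) * P k =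
        ∑ j, C (eval w (map (starRingEnd ℂ) (Q j))) * Q j) :
    Submodule.span ℂ (Set.range P) ≤ Submodule.span ℂ (Set.range Q) := by
  rw [Submodule.span_le]
  rintro _ ⟨k0, rfl⟩
  show P k0 ∈ Submodule.span ℂ (Set.range Q)
  set U := Submodule.span ℂ (Set.range Q) with hU
  haveI hfree : Module.Free ℂ (MvPolynomial (Fin n) ℂ ⧸ U) := Module.Free.of_divisionRing ℂ _
  haveI hproj : Module.Projective ℂ (MvPolynomial (Fin n) ℂ ⧸ U) := Module.Projective.of_free
  rw [← Submodule.Quotient.mk_eq_zero U,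
    ← Module.forall_dual_apply_eq_zero_iff ℂ (Submodule.Quotient.mk (P k0))]
  intro ψ
  set φ : MvPolynomial (Fin n) ℂ →ₗ[ℂ] ℂ := ψ.comp U.mkQ with hφ
  have hCa : ∀ (a : ℂ) (r : MvPolynomial (Fin n) ℂ), φ (C a * r) = a * φ r := by
    intro a r; rw [← MvPolynomial.smul_eq_C_mul, map_smul, smul_eq_mul]
  have hφQ : ∀ j, φ (Q j) = 0 := by
    intro j
    have hm : Q j ∈ U := Submodule.subset_span ⟨j, rfl⟩
    simp only [hφ, LinearMap.comp_apply, Submodule.mkQ_apply,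
      (Submodule.Quotient.mk_eq_zero U).2 hm, map_zero]
  have hs : ∀ w : Fin n → ℂ, ∑ k, φ (P k) * eval w (map (starRingEnd ℂ) (P k)) = 0 := by
    intro w
    have h1 := congrArg φ (hpoly w)
    simp only [map_sum, hCa, hφQ, mul_zero, Finset.sum_const_zero] at h1
    simpa [mul_comm] using h1
  have hs0 : (∑ k, C (φ (P k)) * map (starRingEnd ℂ) (P k)) = 0 := by
    apply MvPolynomial.funext (q := 0)
    intro w
    simpa [eval_C] using hs w
  have hcomp : (starRingEnd ℂ).comp (starRingEnd ℂ) = RingHom.id ℂ :=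
    RingHom.ext fun x => Complex.conj_conj x
  have hs1 : (∑ k, C (starRingEnd ℂ (φ (P k))) * P k) = 0 := by
    have h2 := congrArg (map (starRingEnd ℂ)) hs0
    simp only [map_sum, map_mul, MvPolynomial.map_C, MvPolynomial.map_map, hcomp,
      MvPolynomial.map_id, map_zero] at h2
    exact h2
  have hsum : ∑ k, Complex.normSq (φ (P k)) = (0 : ℝ) := by
    have h3 := congrArg φ hs1
    simp only [map_sum, hCa, map_zero] at h3
    have h4 : ((∑ k, Complex.normSq (φ (P k)) : ℝ) : ℂ) = 0 := by
      rw [Complex.ofReal_sum]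
      rw [← h3]
      refine Finset.sum_congr rfl fun k _ => ?_
      rw [mul_comm, Complex.mul_conj]
    exact_mod_cast h4
  have hk0 : Complex.normSq (φ (P k0)) = 0 := by
    have := (Finset.sum_eq_zero_iff_of_nonneg
      (fun k _ => Complex.normSq_nonneg (φ (P k)))).mp hsum k0 (Finset.mem_univ k0)
    exact this
  have : φ (P k0) = 0 := Complex.normSq_eq_zero.mp hk0
  simpa [hφ] using this

/-- If two polynomial mappings `P = (P¹,…,P^p)` and `Q = (Q¹,…,Q^q)` on `ℂⁿ` satisfy
`‖P(z)‖² = ‖Q(z)‖²` for all `z ∈ ℂⁿ`, then the components of `P` and of `Q` span the same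
complex subspace of `ℂ[z¹,…,zⁿ]`; in particular `P` and `Q` have the same linear rank. -/
theorem span_eq_of_sqNorm_eq {n p q : ℕ}
    (P : Fin p → MvPolynomial (Fin n) ℂ) (Q : Fin q → MvPolynomial (Fin n) ℂ)
    (h : ∀ z : Fin n → ℂ,
      ∑ k, Complex.normSq (MvPolynomial.eval z (P k)) =
        ∑ k, Complex.normSq (MvPolynomial.eval z (Q k))) :
    Submodule.span ℂ (Set.range P) = Submodule.span ℂ (Set.range Q) ∧
      Module.finrank ℂ (Submodule.span ℂ (Set.range P)) =
        Module.finrank ℂ (Submodule.span ℂ (Set.range Q)) := by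
  set g : MvPolynomial (Fin n ⊕ Fin n) ℂ :=
    (∑ k, rename Sum.inl (P k) * rename Sum.inr (map (starRingEnd ℂ) (P k))) -
    (∑ k, rename Sum.inl (Q k) * rename Sum.inr (map (starRingEnd ℂ) (Q k))) with hg
  have hgeval : ∀ z w : Fin n → ℂ, eval (Sum.elim z w) g =
      (∑ k, eval z (P k) * eval w (map (starRingEnd ℂ) (P k))) -
      (∑ k, eval z (Q k) * eval w (map (starRingEnd ℂ) (Q k))) := by
    intro z w
    simp only [hg, map_sub, map_sum, map_mul, eval_rename, Sum.elim_comp_inl,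
      Sum.elim_comp_inr]
  have hdiag : ∀ z : Fin n → ℂ,
      eval (Sum.elim z (fun j => starRingEnd ℂ (z j))) g = 0 := by
    intro z
    rw [hgeval]
    have he : ∀ r : MvPolynomial (Fin n) ℂ,
        eval z r * eval (fun j => starRingEnd ℂ (z j)) (map (starRingEnd ℂ) r) =
          (Complex.normSq (eval z r) : ℂ) := by
      intro r
      rw [conj_eval]
      have : (fun i => starRingEnd ℂ (starRingEnd ℂ (z i))) = z := by
        funext i; exact Complex.conj_conj _
      rw [this, Complex.mul_conj]
    simp only [he]
    rw [← Complex.ofReal_sum, ← Complex.ofReal_sum, h z, sub_self]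
  have hzw := vanish_of_conj_diag g hdiag
  have hpoly : ∀ w : Fin n → ℂ,
      ∑ k, C (eval w (map (starRingEnd ℂ) (P k))) * P k =
        ∑ j, C (eval w (map (starRingEnd ℂ) (Q j))) * Q j := by
    intro w
    apply MvPolynomial.funext
    intro z
    have := hzw z w
    rw [hgeval, sub_eq_zero] at this
    simp only [map_sum, map_mul, eval_C]
    simpa [mul_comm] using this
  have hspan : Submodule.span ℂ (Set.range P) = Submodule.span ℂ (Set.range Q) :=
    le_antisymm (span_le_aux P Q hpoly) (span_le_aux Q P fun w => (hpoly w).symm)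
  exact ⟨hspan, by rw [hspan]⟩
end
end

section
/- Let F, G, P be polynomial mappings in z = (z¹, …, zⁿ) ∈ ℂⁿ such that ‖P(z)‖² = (‖F(z)‖² − ‖G(z)‖²)·‖z‖² for all z ∈ ℂⁿ, and let r denote the linear rank of P. Then dim_ℂ V_{F⊗z} − dim_ℂ V_{G⊗z} ≤ r ≤ dim_ℂ V_{F⊗z}. -/
open scoped BigOperators

noncomputable section

namespace SosRankAux

open MvPolynomial

/-- Applying an `ℝ`-linear functional to coefficients commutes with evaluation at real points. -/
lemma eval_real_lin {σ : Type*} (φ : ℂ →ₗ[ℝ] ℝ) (q : MvPolynomial σ ℂ) (x : σ → ℝ) :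
    φ (eval (fun i => (x i : ℂ)) q) =
      eval x (q.support.sum fun d => monomial d (φ (q.coeff d))) := by
  rw [eval_eq, map_sum, map_sum]
  refine Finset.sum_congr rfl fun d _ => ?_
  rw [eval_monomial, Finsupp.prod]
  have hcast : (∏ i ∈ d.support, ((x i : ℂ)) ^ d i)
      = ((∏ i ∈ d.support, (x i) ^ d i : ℝ) : ℂ) := by push_cast; rfl
  rw [hcast, mul_comm, ← Complex.real_smul, map_smul, smul_eq_mul, mul_comm]

/-- A complex-coefficient polynomial vanishing at all real points is zero. -/
lemma eq_zero_of_eval_real {σ : Type*} (q : MvPolynomial σ ℂ)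
    (h : ∀ x : σ → ℝ, eval (fun i => (x i : ℂ)) q = 0) : q = 0 := by
  classical
  have key : ∀ φ : ℂ →ₗ[ℝ] ℝ, ∀ d, d ∈ q.support → φ (q.coeff d) = 0 := by
    intro φ d hd
    have h0 : (q.support.sum fun d => monomial d (φ (q.coeff d))) = 0 := by
      apply MvPolynomial.funext
      intro x
      rw [← eval_real_lin φ q x, h x, map_zero, map_zero]
    have := congrArg (coeff d) h0
    rw [coeff_zero, coeff_sum] at this
    simp only [coeff_monomial, Finset.sum_ite_eq' q.support d] at this
    rw [if_pos hd] at this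
    exact this
  by_contra hq
  obtain ⟨d, hd⟩ := Finset.nonempty_iff_ne_empty.2
    (fun hsupp => hq (MvPolynomial.support_eq_empty.1 hsupp))
  have hre := key Complex.reLm d hd
  have him := key Complex.imLm d hd
  have : q.coeff d = 0 := Complex.ext hre him
  exact (MvPolynomial.mem_support_iff.1 hd) this

/-- If a polynomial in variables `(z, w)` vanishes at all points `(z, conj z)`, it is zero. -/
lemma eq_zero_of_eval_conj {n : ℕ} (p : MvPolynomial (Fin n ⊕ Fin n) ℂ)
    (h : ∀ z : Fin n → ℂ,
      eval (Sum.elim z fun i => (starRingEnd ℂ) (z i)) p = 0) : p = 0 := by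
  set s : Fin n ⊕ Fin n → MvPolynomial (Fin n ⊕ Fin n) ℂ :=
    Sum.elim (fun i => X (Sum.inl i) + C Complex.I * X (Sum.inr i))
      (fun i => X (Sum.inl i) - C Complex.I * X (Sum.inr i)) with hs
  set t : Fin n ⊕ Fin n → MvPolynomial (Fin n ⊕ Fin n) ℂ :=
    Sum.elim (fun i => C (1/2 : ℂ) * (X (Sum.inl i) + X (Sum.inr i)))
      (fun i => C (-Complex.I/2) * (X (Sum.inl i) - X (Sum.inr i))) with ht
  have hq : aeval s p = 0 := by
    apply eq_zero_of_eval_real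
    intro x
    have haee : ∀ {σ : Type} (f : σ → ℂ) (q : MvPolynomial σ ℂ), aeval f q = eval f q := by
      intro σ f q
      rw [aeval_def, Algebra.algebraMap_self, eval₂_id]
    have hev : eval (fun i => (x i : ℂ)) (aeval s p)
        = eval (fun j => eval (fun i => (x i : ℂ)) (s j)) p := by
      rw [← haee, show (aeval s p : MvPolynomial (Fin n ⊕ Fin n) ℂ) = bind₁ s p from rfl,
        aeval_bind₁, haee]
      simp only [haee]
    rw [hev]
    have hpt : (fun j => eval (fun i => (x i : ℂ)) (s j))
        = Sum.elim (fun i => (x (Sum.inl i) : ℂ) + Complex.I * (x (Sum.inr i) : ℂ))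
            (fun i => (starRingEnd ℂ)
              ((x (Sum.inl i) : ℂ) + Complex.I * (x (Sum.inr i) : ℂ))) := by
      funext j
      cases j with
      | inl i => simp [hs]
      | inr i =>
          simp [hs, map_add, map_mul, Complex.conj_ofReal, Complex.conj_I]
          ring
    rw [hpt]
    exact h _
  have hC : (C Complex.I : MvPolynomial (Fin n ⊕ Fin n) ℂ) * C (-Complex.I/2) = C (1/2 : ℂ) := by
    rw [← C_mul]
    congr 1
    linear_combination (-1/2 : ℂ) * Complex.I_mul_I
  have hone : (C (1/2 : ℂ) : MvPolynomial (Fin n ⊕ Fin n) ℂ) * 2 = 1 := by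
    rw [show (2 : MvPolynomial (Fin n ⊕ Fin n) ℂ) = C 2 from (map_ofNat C 2).symm, ← C_mul]
    norm_num
  have hts : ∀ j, bind₁ t (s j) = (X j : MvPolynomial (Fin n ⊕ Fin n) ℂ) := by
    intro j
    cases j with
    | inl i =>
        simp only [hs, ht, map_add, map_mul, bind₁_X_right, bind₁_C_right, Sum.elim_inl, Sum.elim_inr]
        linear_combination (X (Sum.inl i) - X (Sum.inr i)) * hC + X (Sum.inl i) * hone
    | inr i =>
        simp only [hs, ht, map_sub, map_mul, bind₁_X_right, bind₁_C_right, Sum.elim_inl, Sum.elim_inr]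
        linear_combination (-(X (Sum.inl i) - X (Sum.inr i))) * hC + X (Sum.inr i) * hone
  have hcomp : bind₁ t (bind₁ s p) = p := by
    rw [bind₁_bind₁, funext hts]
    exact AlgHom.congr_fun bind₁_X_left p
  have : p = aeval t (aeval s p) := hcomp.symm
  rw [this, hq, map_zero]


/-- Conjugation-evaluation identity. -/
lemma conj_eval_map {n : ℕ} (Q : MvPolynomial (Fin n) ℂ) (w : Fin n → ℂ) :
    (starRingEnd ℂ) (eval w (map (starRingEnd ℂ) Q))
      = eval (fun i => (starRingEnd ℂ) (w i)) Q := by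
  have hcc : (starRingEnd ℂ).comp (starRingEnd ℂ) = RingHom.id ℂ := by
    ext a; simp
  rw [eval_map, eval₂_comp_left (starRingEnd ℂ) (starRingEnd ℂ) w Q, hcc, eval₂_id]
  rfl

lemma eval_conj_map {n : ℕ} (Q : MvPolynomial (Fin n) ℂ) (z : Fin n → ℂ) :
    eval (fun i => (starRingEnd ℂ) (z i)) (map (starRingEnd ℂ) Q)
      = (starRingEnd ℂ) (eval z Q) := by
  rw [eval_map, ← eval₂_id (g := z) Q, eval₂_comp_left (starRingEnd ℂ) (RingHom.id ℂ) z Q]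
  rfl

/-- Polarized tensor identity from an equality of squared norms. -/
lemma tensor_eq {n : ℕ} {ι κ : Type*} [Fintype ι] [Fintype κ]
    (A : ι → MvPolynomial (Fin n) ℂ) (B : κ → MvPolynomial (Fin n) ℂ)
    (h : ∀ z : Fin n → ℂ,
      ∑ k, Complex.normSq (eval z (A k)) = ∑ j, Complex.normSq (eval z (B j))) :
    ∑ k, rename Sum.inl (A k) * rename Sum.inr (map (starRingEnd ℂ) (A k)) =
      ∑ j, rename Sum.inl (B j) * rename Sum.inr (map (starRingEnd ℂ) (B j)) := by
  rw [← sub_eq_zero]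
  apply eq_zero_of_eval_conj
  intro z
  have key : ∀ Q : MvPolynomial (Fin n) ℂ,
      eval (Sum.elim z fun i => (starRingEnd ℂ) (z i))
        (rename Sum.inl Q * rename Sum.inr (map (starRingEnd ℂ) Q))
      = (Complex.normSq (eval z Q) : ℂ) := by
    intro Q
    rw [map_mul, eval_rename, eval_rename, Sum.elim_comp_inl, Sum.elim_comp_inr,
      eval_conj_map, Complex.mul_conj]
  rw [map_sub, map_sum, map_sum]
  simp only [key]
  rw [sub_eq_zero]
  exact_mod_cast congrArg (fun r : ℝ => (r : ℂ)) (h z)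

/-- The span comparison from the tensor identity. -/
lemma span_le_of_tensor {n : ℕ} {ι κ : Type*} [Fintype ι] [DecidableEq ι] [Fintype κ]
    (A : ι → MvPolynomial (Fin n) ℂ) (B : κ → MvPolynomial (Fin n) ℂ)
    (hT : ∑ k, rename Sum.inl (A k) * rename Sum.inr (map (starRingEnd ℂ) (A k)) =
      ∑ j, rename Sum.inl (B j) * rename Sum.inr (map (starRingEnd ℂ) (B j))) :
    Submodule.span ℂ (Set.range A) ≤ Submodule.span ℂ (Set.range B) := by
  classical
  set conjA : (Fin n → ℂ) → EuclideanSpace ℂ ι :=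
    fun w => WithLp.toLp 2 fun k => eval w (map (starRingEnd ℂ) (A k)) with hconjA
  let T : EuclideanSpace ℂ ι →ₗ[ℂ] MvPolynomial (Fin n) ℂ :=
    { toFun := fun c => ∑ k, c k • A k
      map_add' := by
        intro a b
        simp [add_smul, Finset.sum_add_distrib]
      map_smul' := by
        intro r a
        simp [smul_smul, Finset.smul_sum] }
  have hTapp : ∀ c : EuclideanSpace ℂ ι, T c = ∑ k, c k • A k := fun _ => rfl
  have haevC : ∀ (R : MvPolynomial (Fin n) ℂ) (w : Fin n → ℂ),
      aeval (fun i => (C (w i) : MvPolynomial (Fin n) ℂ)) R = C (eval w R) := by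
    intro R w
    rw [aeval_def, algebraMap_eq, ← eval₂_id (g := w) R, eval₂_comp_left C (RingHom.id ℂ) w R]
    rfl
  have hmem : ∀ w, T (conjA w) ∈ Submodule.span ℂ (Set.range B) := by
    intro w
    have h2 := congrArg (aeval (Sum.elim X fun i => C (w i)) :
        MvPolynomial (Fin n ⊕ Fin n) ℂ →ₐ[ℂ] MvPolynomial (Fin n) ℂ) hT
    simp only [map_sum, map_mul, aeval_rename, Sum.elim_comp_inl, Sum.elim_comp_inr,
      aeval_X_left_apply, haevC] at h2
    have hTc : T (conjA w) = ∑ k, A k * C (eval w (map (starRingEnd ℂ) (A k))) := by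
      rw [hTapp]
      refine Finset.sum_congr rfl fun k _ => ?_
      rw [smul_eq_C_mul, mul_comm]
    rw [hTc, h2]
    refine Submodule.sum_mem _ fun j _ => ?_
    rw [mul_comm, ← smul_eq_C_mul]
    exact Submodule.smul_mem _ _ (Submodule.subset_span ⟨j, rfl⟩)
  set S : Submodule ℂ (EuclideanSpace ℂ ι) := Submodule.span ℂ (Set.range conjA) with hS
  have hker : Sᗮ ≤ LinearMap.ker T := by
    intro c hc
    rw [LinearMap.mem_ker]
    apply MvPolynomial.funext
    intro u
    rw [map_zero]
    have hw := (Submodule.mem_orthogonal S c).1 hc (conjA fun i => (starRingEnd ℂ) (u i))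
      (Submodule.subset_span ⟨_, rfl⟩)
    rw [PiLp.inner_apply] at hw
    have : ∀ k, inner ℂ (conjA (fun i => (starRingEnd ℂ) (u i)) k) (c k)
        = eval u (A k) * c k := by
      intro k
      rw [RCLike.inner_apply, hconjA]
      simp only []
      rw [conj_eval_map]
      simp [Complex.conj_conj]
      exact mul_comm _ _
    rw [Finset.sum_congr rfl fun k _ => this k] at hw
    rw [hTapp, map_sum]
    simpa [smul_eval, mul_comm] using hw
  have hsup : S ⊔ Sᗮ = ⊤ := Submodule.sup_orthogonal_of_hasOrthogonalProjection
  rw [Submodule.span_le]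
  rintro _ ⟨m, rfl⟩
  have hsingle : A m = T (EuclideanSpace.single m 1) := by
    rw [hTapp]
    simp [EuclideanSpace.single_apply, ite_smul, Finset.sum_ite_eq']
  obtain ⟨y, hy, z, hz, hyz⟩ := Submodule.mem_sup.1
    (hsup ▸ Submodule.mem_top (x := EuclideanSpace.single m 1))
  have hz0 : T z = 0 := hker hz
  have : A m = T y := by rw [hsingle, ← hyz, map_add, hz0, add_zero]
  rw [this]
  have hmapS : Submodule.map T S ≤ Submodule.span ℂ (Set.range B) := by
    rw [hS, Submodule.map_span, Submodule.span_le]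
    rintro _ ⟨_, ⟨w, rfl⟩, rfl⟩
    exact hmem w
  exact hmapS ⟨y, hy, rfl⟩

lemma span_eq_of_normSq {n : ℕ} {ι κ : Type*} [Fintype ι] [DecidableEq ι] [Fintype κ]
    [DecidableEq κ]
    (A : ι → MvPolynomial (Fin n) ℂ) (B : κ → MvPolynomial (Fin n) ℂ)
    (h : ∀ z : Fin n → ℂ,
      ∑ k, Complex.normSq (eval z (A k)) = ∑ j, Complex.normSq (eval z (B j))) :
    Submodule.span ℂ (Set.range A) = Submodule.span ℂ (Set.range B) :=
  le_antisymm (span_le_of_tensor A B (tensor_eq A B h))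
    (span_le_of_tensor B A (tensor_eq B A fun z => (h z).symm))

end SosRankAux

/-- Let `F`, `G`, `P` be polynomial mappings on `ℂⁿ` with
`‖P(z)‖² = (‖F(z)‖² − ‖G(z)‖²)·‖z‖²` for all `z ∈ ℂⁿ`, and let `r` be the linear rank of
`P`.  Then `dim V_{F⊗z} − dim V_{G⊗z} ≤ r ≤ dim V_{F⊗z}`. -/
theorem rank_bounds_of_sos_identity {n pF pG pP : ℕ}
    (F : Fin pF → MvPolynomial (Fin n) ℂ) (G : Fin pG → MvPolynomial (Fin n) ℂ)
    (P : Fin pP → MvPolynomial (Fin n) ℂ)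
    (h : ∀ z : Fin n → ℂ,
      ∑ k, Complex.normSq (MvPolynomial.eval z (P k)) =
        ((∑ j, Complex.normSq (MvPolynomial.eval z (F j))) -
            ∑ k, Complex.normSq (MvPolynomial.eval z (G k))) *
          ∑ i, Complex.normSq (z i))
    (r : ℕ) (hr : r = Module.finrank ℂ (Submodule.span ℂ (Set.range P))) :
    Module.finrank ℂ
          (Submodule.span ℂ
            (Set.range fun ji : Fin pF × Fin n => F ji.1 * MvPolynomial.X ji.2)) -
        Module.finrank ℂ
          (Submodule.span ℂ
            (Set.range fun ki : Fin pG × Fin n => G ki.1 * MvPolynomial.X ki.2)) ≤ r ∧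
      r ≤ Module.finrank ℂ
        (Submodule.span ℂ
          (Set.range fun ji : Fin pF × Fin n => F ji.1 * MvPolynomial.X ji.2)) := by
  classical
  set FX : Fin pF × Fin n → MvPolynomial (Fin n) ℂ := fun ji => F ji.1 * MvPolynomial.X ji.2
    with hFX
  set GX : Fin pG × Fin n → MvPolynomial (Fin n) ℂ := fun ki => G ki.1 * MvPolynomial.X ki.2
    with hGX
  set A : (Fin pP ⊕ Fin pG × Fin n) → MvPolynomial (Fin n) ℂ := Sum.elim P GX with hA
  have hprod : ∀ z : Fin n → ℂ, ∀ (p : ℕ) (Q : Fin p → MvPolynomial (Fin n) ℂ),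
      ∑ ji : Fin p × Fin n, Complex.normSq (MvPolynomial.eval z (Q ji.1 * MvPolynomial.X ji.2))
        = (∑ j, Complex.normSq (MvPolynomial.eval z (Q j))) * ∑ i, Complex.normSq (z i) := by
    intro z p Q
    rw [Fintype.sum_prod_type, Finset.sum_mul_sum]
    simp [Complex.normSq_mul]
  have hnorm : ∀ z : Fin n → ℂ,
      ∑ i, Complex.normSq (MvPolynomial.eval z (A i))
        = ∑ j, Complex.normSq (MvPolynomial.eval z (FX j)) := by
    intro z
    rw [Fintype.sum_sum_type]
    simp only [hA, Sum.elim_inl, Sum.elim_inr, hGX, hFX]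
    rw [hprod z pG G, hprod z pF F, h z]
    ring
  have hspan := SosRankAux.span_eq_of_normSq A FX hnorm
  rw [hA, Set.Sum.elim_range, Submodule.span_union] at hspan
  haveI iF : FiniteDimensional ℂ (Submodule.span ℂ (Set.range FX)) :=
    FiniteDimensional.span_of_finite ℂ (Set.finite_range _)
  haveI iG : FiniteDimensional ℂ (Submodule.span ℂ (Set.range GX)) :=
    FiniteDimensional.span_of_finite ℂ (Set.finite_range _)
  haveI iP : FiniteDimensional ℂ (Submodule.span ℂ (Set.range P)) :=
    FiniteDimensional.span_of_finite ℂ (Set.finite_range _)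
  have h2 : r ≤ Module.finrank ℂ (Submodule.span ℂ (Set.range FX)) := by
    rw [hr]
    exact Submodule.finrank_mono (le_trans le_sup_left hspan.le)
  have h3 : Module.finrank ℂ (Submodule.span ℂ (Set.range FX))
      ≤ Module.finrank ℂ (Submodule.span ℂ (Set.range P))
        + Module.finrank ℂ (Submodule.span ℂ (Set.range GX)) := by
    rw [← hspan]
    have := Submodule.finrank_sup_add_finrank_inf_eq (Submodule.span ℂ (Set.range P))
      (Submodule.span ℂ (Set.range GX))
    omega
  rw [hr]
  omega
end
end

section
/- Let F, G, P be polynomial mappings in z = (z¹, …, zⁿ) ∈ ℂⁿ such that ‖P(z)‖² = (‖F(z)‖² − ‖G(z)‖²)·‖z‖² for all z ∈ ℂⁿ. Then for every real t with 0 ≤ t ≤ 1 there exists a polynomial mapping P_t in z such that ‖P_t(z)‖² = (‖F(z)‖² − t·‖G(z)‖²)·‖z‖² for all z ∈ ℂⁿ. -/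
open scoped BigOperators

noncomputable section

/-- Let `F`, `G`, `P` be polynomial mappings on `ℂⁿ` with
`‖P(z)‖² = (‖F(z)‖² − ‖G(z)‖²)·‖z‖²` for all `z ∈ ℂⁿ`.  Then for every real `t ∈ [0,1]`
there is a polynomial mapping `P_t` with `‖P_t(z)‖² = (‖F(z)‖² − t·‖G(z)‖²)·‖z‖²` for all
`z ∈ ℂⁿ`. -/
theorem sos_family_of_sos_identity {n pF pG pP : ℕ}
    (F : Fin pF → MvPolynomial (Fin n) ℂ) (G : Fin pG → MvPolynomial (Fin n) ℂ)
    (P : Fin pP → MvPolynomial (Fin n) ℂ)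
    (h : ∀ z : Fin n → ℂ,
      ∑ k, Complex.normSq (MvPolynomial.eval z (P k)) =
        ((∑ j, Complex.normSq (MvPolynomial.eval z (F j))) -
            ∑ k, Complex.normSq (MvPolynomial.eval z (G k))) *
          ∑ i, Complex.normSq (z i)) :
    ∀ t : ℝ, 0 ≤ t → t ≤ 1 →
      ∃ (m : ℕ) (Pt : Fin m → MvPolynomial (Fin n) ℂ),
        ∀ z : Fin n → ℂ,
          ∑ k, Complex.normSq (MvPolynomial.eval z (Pt k)) =
            ((∑ j, Complex.normSq (MvPolynomial.eval z (F j))) -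
                t * ∑ k, Complex.normSq (MvPolynomial.eval z (G k))) *
              ∑ i, Complex.normSq (z i) := by
  intro t ht0 ht1
  -- index type
  set ι := (Fin pF × Fin n) ⊕ Fin pP with hι
  have e : ι ≃ Fin (pF * n + pP) := by
    refine (Equiv.sumCongr (finProdFinEquiv (m := pF) (n := n)) (Equiv.refl _)).trans
      finSumFinEquiv
  -- the family
  set Q : ι → MvPolynomial (Fin n) ℂ := fun x =>
    match x with
    | Sum.inl (j, i) =>
        MvPolynomial.C ((Real.sqrt (1 - t) : ℝ) : ℂ) * F j * MvPolynomial.X i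
    | Sum.inr k => MvPolynomial.C ((Real.sqrt t : ℝ) : ℂ) * P k
    with hQ
  refine ⟨pF * n + pP, fun k => Q (e.symm k), fun z => ?_⟩
  have hsum : ∑ k, Complex.normSq (MvPolynomial.eval z (Q (e.symm k))) =
      ∑ x : ι, Complex.normSq (MvPolynomial.eval z (Q x)) :=
    Fintype.sum_equiv e.symm _ _ (fun k => rfl)
  rw [hsum, Fintype.sum_sum_type]
  have h1t : (0:ℝ) ≤ 1 - t := by linarith
  have hs1 : Real.sqrt (1 - t) ^ 2 = 1 - t := Real.sq_sqrt h1t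
  have hs2 : Real.sqrt t ^ 2 = t := Real.sq_sqrt ht0
  have hA : ∑ x : Fin pF × Fin n, Complex.normSq (MvPolynomial.eval z (Q (Sum.inl x))) =
      (1 - t) * ((∑ j, Complex.normSq (MvPolynomial.eval z (F j))) *
        ∑ i, Complex.normSq (z i)) := by
    rw [Fintype.sum_prod_type]
    simp only [hQ, map_mul, MvPolynomial.eval_C, MvPolynomial.eval_X, Complex.normSq_mul,
      Complex.normSq_ofReal, Real.mul_self_sqrt h1t]
    simp_rw [← Finset.mul_sum, ← Finset.sum_mul, ← Finset.mul_sum]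
    ring
  have hB : ∑ k : Fin pP, Complex.normSq (MvPolynomial.eval z (Q (Sum.inr k))) =
      t * ∑ k, Complex.normSq (MvPolynomial.eval z (P k)) := by
    simp only [hQ, map_mul, MvPolynomial.eval_C, Complex.normSq_mul, Complex.normSq_ofReal,
      Real.mul_self_sqrt ht0, Finset.mul_sum]
  rw [hA, hB, h z]
  ring
end
end

section
/- Let n ≥ 2 and l₀ ≥ 2 be integers, let d₁ = 0 ≤ d₂ ≤ ⋯ ≤ d_{l₀} = d be integers, and let k₂, …, k_{l₀} be integers with 0 ≤ k_l ≤ n − 1 such that Σ_{j=0}^{k_l − 1}(n − j) ≤ d_l − d_{l−1} for each l = 2, …, l₀. Set k := Σ_{l=2}^{l₀} k_l and assume k < n. Then Σ_{i=0}^{k−1}(n − i) ≤ d; consequently, if moreover d ≤ Σ_{i=0}^{κ−1}(n − i) − 1 for some integer κ ≥ 1, then k ≤ κ − 1. -/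
open scoped BigOperators

private lemma sum_superadd (n : ℕ) (a b : ℕ) :
    (∑ i ∈ Finset.range (a + b), ((n : ℤ) - i)) ≤
      (∑ i ∈ Finset.range a, ((n : ℤ) - i)) + (∑ j ∈ Finset.range b, ((n : ℤ) - j)) := by
  rw [Finset.sum_range_add]
  gcongr with j hj
  have : (0:ℤ) ≤ a := Nat.cast_nonneg a

  linarith [Nat.cast_nonneg (α := ℤ) a]

/-- Let `n ≥ 2` and `l₀ ≥ 2` be integers, let `d₁ = 0 ≤ d₂ ≤ ⋯ ≤ d_{l₀} = d` be integers,
and let `k₂, …, k_{l₀}` be integers with `0 ≤ k_l ≤ n − 1` such that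
`Σ_{j=0}^{k_l−1}(n−j) ≤ d_l − d_{l−1}` for each `l = 2, …, l₀`.  Set `k := Σ_{l=2}^{l₀} k_l`
and assume `k < n`.  Then `Σ_{i=0}^{k−1}(n−i) ≤ d`; consequently, if moreover
`d ≤ Σ_{i=0}^{κ−1}(n−i) − 1` for some integer `κ ≥ 1`, then `k ≤ κ − 1`. -/
theorem telescoping_degeneracy_estimate (n l₀ : ℕ) (hn : 2 ≤ n) (hl₀ : 2 ≤ l₀)
    (d : ℕ → ℤ) (hd1 : d 1 = 0)
    (hmono : ∀ l : ℕ, 1 ≤ l → l + 1 ≤ l₀ → d l ≤ d (l + 1))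
    (k : ℕ → ℕ) (hkle : ∀ l : ℕ, 2 ≤ l → l ≤ l₀ → k l ≤ n - 1)
    (hkd : ∀ l : ℕ, 2 ≤ l → l ≤ l₀ →
      (∑ j ∈ Finset.range (k l), ((n : ℤ) - j)) ≤ d l - d (l - 1))
    (K : ℕ) (hK : K = ∑ l ∈ Finset.Icc 2 l₀, k l) (hKn : K < n) :
    (∑ i ∈ Finset.range K, ((n : ℤ) - i)) ≤ d l₀ ∧
      ∀ κ : ℕ, 1 ≤ κ →
        d l₀ ≤ (∑ i ∈ Finset.range κ, ((n : ℤ) - i)) - 1 → K ≤ κ - 1 := by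
  have main : ∀ m : ℕ, 1 ≤ m → m ≤ l₀ →
      (∑ i ∈ Finset.range (∑ l ∈ Finset.Icc 2 m, k l), ((n : ℤ) - i)) ≤ d m := by
    intro m
    induction m with
    | zero => omega
    | succ m ih =>
      intro _ hm
      rcases Nat.eq_or_lt_of_le (show 1 ≤ m + 1 from by omega) with h1 | h1
      · -- m + 1 = 1
        have : m = 0 := by omega
        subst this
        simp [hd1]
      · -- m ≥ 1
        have hm1 : 1 ≤ m := by omega
        have hIcc : Finset.Icc 2 (m + 1) = insert (m + 1) (Finset.Icc 2 m) := by
          ext x; simp [Finset.mem_Icc]; omega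
        have hsum : (∑ l ∈ Finset.Icc 2 (m + 1), k l)
            = (∑ l ∈ Finset.Icc 2 m, k l) + k (m + 1) := by
          rw [hIcc, Finset.sum_insert (by simp)]
          ring
        have hkd' := hkd (m + 1) (by omega) hm
        simp only [Nat.add_sub_cancel] at hkd'
        have ihm := ih hm1 (by omega)
        calc (∑ i ∈ Finset.range (∑ l ∈ Finset.Icc 2 (m + 1), k l), ((n : ℤ) - i))
            ≤ (∑ i ∈ Finset.range (∑ l ∈ Finset.Icc 2 m, k l), ((n : ℤ) - i))
              + (∑ j ∈ Finset.range (k (m + 1)), ((n : ℤ) - j)) := by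
              rw [hsum]; exact sum_superadd n _ _
          _ ≤ d m + (d (m + 1) - d m) := add_le_add ihm hkd'
          _ = d (m + 1) := by ring
  have h1 : (∑ i ∈ Finset.range K, ((n : ℤ) - i)) ≤ d l₀ := by
    rw [hK]; exact main l₀ (by omega) le_rfl
  refine ⟨h1, fun κ hκ hdκ => ?_⟩
  by_contra hcon
  have hKκ : κ ≤ K := by omega
  have hmono' : (∑ i ∈ Finset.range κ, ((n : ℤ) - i)) ≤ ∑ i ∈ Finset.range K, ((n : ℤ) - i) := by
    apply Finset.sum_le_sum_of_subset_of_nonneg (Finset.range_subset_range.mpr hKκ)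
    intro i hi _
    have : i < n := lt_of_lt_of_le (Finset.mem_range.mp hi) hKn.le
    have : (i : ℤ) < n := by exact_mod_cast this
    linarith
  linarith
end
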